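/- Let M ∈ S^{n+k}_{++} and let μ : R^n → R^k be L₁-Lipschitz (‖μ(ξ) − μ(ξ̄)‖ ≤ L₁‖ξ − ξ̄‖). Define ψ(ξ) = ‖(ξ, μ(ξ))‖_M, where (ξ, μ(ξ)) denotes the concatenated vector. Then |ψ(ξ) − ψ(ξ̄)| ≤ δ‖ξ − ξ̄‖ for all ξ, ξ̄, where, writing M = [[W, Gᵀ],[G, H]], δ² = λ⁺(W) + L₁²λ⁺(H) + 2L₁‖G‖. -/

import Mathlib

open Matrix

noncomputable def euclNorm {ι : Type*} [Fintype ι] (x : ι → ℝ) : ℝ := Real.sqrt (x ⬝ᵥ x)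
noncomputable def qNorm {ι : Type*} [Fintype ι] (M : Matrix ι ι ℝ) (x : ι → ℝ) : ℝ :=
  Real.sqrt (x ⬝ᵥ M.mulVec x)
noncomputable def lamMax {ι : Type*} [Fintype ι] [DecidableEq ι] (M : Matrix ι ι ℝ) : ℝ :=
  sSup (spectrum ℝ M)
noncomputable def opN {ι κ : Type*} [Fintype ι] [Fintype κ] [DecidableEq κ]
    (G : Matrix ι κ ℝ) : ℝ := Real.sqrt (sSup (spectrum ℝ (Gᵀ * G)))

lemma dot_self_nonneg {ι : Type*} [Fintype ι] (x : ι → ℝ) : 0 ≤ x ⬝ᵥ x :=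
  Finset.sum_nonneg fun i _ => mul_self_nonneg (x i)

lemma qNorm_tri {ι : Type*} [Fintype ι] {M : Matrix ι ι ℝ} (hM : M.PosDef) (a b : ι → ℝ) :
    |qNorm M a - qNorm M b| ≤ qNorm M (a - b) := by
  letI N := Matrix.toNormedAddCommGroup M hM
  have h : ∀ z : ι → ℝ, qNorm M z = @norm _ N.toNorm z := by
    intro z
    show _ = Real.sqrt (RCLike.re ((M *ᵥ z) ⬝ᵥ star z))
    rw [dotProduct_comm]
    simp [qNorm]
  rw [h, h, h]
  exact @abs_norm_sub_norm_le _
    (@NormedAddCommGroup.toSeminormedAddCommGroup _ N) a b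

lemma rayleigh {ι : Type*} [Fintype ι] [DecidableEq ι] {A : Matrix ι ι ℝ}
    (hA : A.IsHermitian) (x : ι → ℝ) :
    x ⬝ᵥ A.mulVec x ≤ lamMax A * (x ⬝ᵥ x) := by
  set U : Matrix ι ι ℝ := (hA.eigenvectorUnitary : Matrix ι ι ℝ) with hU
  have hUst : star U = Uᵀ := by
    ext i j; simp [Matrix.star_apply]
  obtain ⟨y, hy⟩ : ∃ y, y = (star U) *ᵥ x := ⟨_, rfl⟩
  have hUU : U * star U = 1 := (Matrix.mem_unitaryGroup_iff).mp hA.eigenvectorUnitary.2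
  have hle : ∀ i, hA.eigenvalues i ≤ lamMax A := by
    intro i
    exact le_csSup (hA.spectrum_real_eq_range_eigenvalues ▸ (Set.finite_range _).bddAbove)
      (hA.eigenvalues_mem_spectrum_real i)
  have hspec : A = U * Matrix.diagonal hA.eigenvalues * star U := by
    simpa using hA.spectral_theorem
  have hkey : x ⬝ᵥ A.mulVec x = ∑ i, hA.eigenvalues i * (y i)^2 := by
    conv_lhs => rw [hspec, Matrix.mul_assoc, ← Matrix.mulVec_mulVec, ← Matrix.mulVec_mulVec,
      Matrix.dotProduct_mulVec, ← Matrix.mulVec_transpose, ← hUst, ← hy]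
    simp [Matrix.mulVec_diagonal, dotProduct, mul_comm, sq, mul_assoc]
  have hxy : x ⬝ᵥ x = ∑ i, (y i)^2 := by
    have h2 : y ⬝ᵥ y = x ⬝ᵥ x := by
      rw [hy, Matrix.dotProduct_mulVec, hUst, Matrix.vecMul_transpose, Matrix.mulVec_mulVec,
        ← hUst, hUU, Matrix.one_mulVec]
    rw [← h2]; simp [dotProduct, sq]
  rw [hkey, hxy, Finset.mul_sum]
  exact Finset.sum_le_sum fun i _ => mul_le_mul_of_nonneg_right (hle i) (sq_nonneg _)

lemma lamMax_nonneg {ι : Type*} [Fintype ι] [DecidableEq ι] {A : Matrix ι ι ℝ}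
    (hA : A.IsHermitian) (hpsd : ∀ x : ι → ℝ, 0 ≤ x ⬝ᵥ A.mulVec x) : 0 ≤ lamMax A := by
  rcases isEmpty_or_nonempty ι with h | h
  · haveI := h
    have : spectrum ℝ A = ∅ := by
      rw [hA.spectrum_real_eq_range_eigenvalues, Set.range_eq_empty]
    rw [lamMax, this, Real.sSup_empty]
  · obtain ⟨i⟩ := h
    have h0 : 0 ≤ hA.eigenvalues i := by
      have := hA.eigenvalues_eq i
      have h2 := hpsd (hA.eigenvectorBasis i)
      simp only [this]
      simpa using h2
    refine le_trans h0 ?_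
    exact le_csSup (hA.spectrum_real_eq_range_eigenvalues ▸ (Set.finite_range _).bddAbove)
      (hA.eigenvalues_mem_spectrum_real i)

lemma expand_blocks {n k : ℕ} (W : Matrix (Fin n) (Fin n) ℝ) (H : Matrix (Fin k) (Fin k) ℝ)
    (G : Matrix (Fin k) (Fin n) ℝ) (u : Fin n → ℝ) (v : Fin k → ℝ) :
    Sum.elim u v ⬝ᵥ (Matrix.fromBlocks W Gᵀ G H).mulVec (Sum.elim u v)
      = u ⬝ᵥ W.mulVec u + 2 * (v ⬝ᵥ G.mulVec u) + v ⬝ᵥ H.mulVec v := by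
  rw [Matrix.fromBlocks_mulVec, sumElim_dotProduct_sumElim,
    dotProduct_add, dotProduct_add]
  simp only [Sum.elim_comp_inl, Sum.elim_comp_inr]
  have h : u ⬝ᵥ Gᵀ *ᵥ v = v ⬝ᵥ G *ᵥ u := by
    rw [Matrix.dotProduct_mulVec, Matrix.vecMul_transpose, dotProduct_comm]
  rw [h]; ring

theorem stmt2 {n k : ℕ}
    (W : Matrix (Fin n) (Fin n) ℝ) (H : Matrix (Fin k) (Fin k) ℝ)
    (G : Matrix (Fin k) (Fin n) ℝ)
    (hM : (Matrix.fromBlocks W Gᵀ G H).PosDef)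
    (μ : (Fin n → ℝ) → (Fin k → ℝ)) (L₁ : ℝ) (hL₁ : 0 < L₁)
    (hμ : ∀ ξ ξ', euclNorm (μ ξ - μ ξ') ≤ L₁ * euclNorm (ξ - ξ'))
    (ψ : (Fin n → ℝ) → ℝ)
    (hψ : ∀ ξ, ψ ξ = qNorm (Matrix.fromBlocks W Gᵀ G H) (Sum.elim ξ (μ ξ))) :
    ∀ ξ ξ', |ψ ξ - ψ ξ'| ≤
      Real.sqrt (lamMax W + L₁^2 * lamMax H + 2 * L₁ * opN G) * euclNorm (ξ - ξ') := by
  intro ξ ξ'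
  set M := Matrix.fromBlocks W Gᵀ G H with hMdef
  -- Hermitian blocks
  have hHerm := hM.isHermitian
  rw [Matrix.isHermitian_fromBlocks_iff] at hHerm
  obtain ⟨hW, -, -, hH⟩ := hHerm
  -- positive semidefiniteness of blocks
  have hMpsd : ∀ z : (Fin n ⊕ Fin k) → ℝ, 0 ≤ z ⬝ᵥ M.mulVec z := fun z => by
    simpa using hM.posSemidef.dotProduct_mulVec_nonneg z
  have hWpsd : ∀ u : Fin n → ℝ, 0 ≤ u ⬝ᵥ W.mulVec u := by
    intro u
    have := hMpsd (Sum.elim u 0)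
    rw [hMdef, expand_blocks] at this
    simpa using this
  have hHpsd : ∀ v : Fin k → ℝ, 0 ≤ v ⬝ᵥ H.mulVec v := by
    intro v
    have := hMpsd (Sum.elim 0 v)
    rw [hMdef, expand_blocks] at this
    simpa using this
  have hGpsd : ∀ u : Fin n → ℝ, 0 ≤ u ⬝ᵥ (Gᵀ * G).mulVec u := by
    intro u
    have h1 : u ⬝ᵥ (Gᵀ * G).mulVec u = (G *ᵥ u) ⬝ᵥ (G *ᵥ u) := by
      rw [← Matrix.mulVec_mulVec, Matrix.dotProduct_mulVec, Matrix.vecMul_transpose]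
    rw [h1]; exact dot_self_nonneg _
  have hGherm : (Gᵀ * G).IsHermitian := Matrix.isHermitian_conjTranspose_mul_self G
  have hlW : 0 ≤ lamMax W := lamMax_nonneg hW hWpsd
  have hlH : 0 ≤ lamMax H := lamMax_nonneg hH hHpsd
  have hlG : 0 ≤ lamMax (Gᵀ * G) := lamMax_nonneg hGherm hGpsd
  have hopN : opN G ^ 2 = lamMax (Gᵀ * G) := Real.sq_sqrt hlG
  have hopN0 : 0 ≤ opN G := Real.sqrt_nonneg _
  -- set up the difference vectors
  set u := ξ - ξ' with hu
  set v := μ ξ - μ ξ' with hv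
  have hsub : Sum.elim ξ (μ ξ) - Sum.elim ξ' (μ ξ') = Sum.elim u v := by
    funext z; cases z <;> simp [hu, hv]
  have huu : 0 ≤ u ⬝ᵥ u := dot_self_nonneg u
  have hvv : 0 ≤ v ⬝ᵥ v := dot_self_nonneg v
  have henu : euclNorm u ^ 2 = u ⬝ᵥ u := Real.sq_sqrt huu
  have henv : euclNorm v ^ 2 = v ⬝ᵥ v := Real.sq_sqrt hvv
  have hen0 : 0 ≤ euclNorm u := Real.sqrt_nonneg _
  have hvu : v ⬝ᵥ v ≤ L₁ ^ 2 * (u ⬝ᵥ u) := by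
    have h1 := hμ ξ ξ'
    rw [← hu, ← hv] at h1
    have h2 := mul_le_mul h1 h1 (Real.sqrt_nonneg _) (mul_nonneg hL₁.le hen0)
    nlinarith [h2, henu, henv]
  -- bound the cross term
  have hc : v ⬝ᵥ G.mulVec u ≤ L₁ * opN G * (u ⬝ᵥ u) := by
    have hCS : (v ⬝ᵥ G.mulVec u) ^ 2 ≤ (v ⬝ᵥ v) * ((G *ᵥ u) ⬝ᵥ (G *ᵥ u)) := by
      have := Finset.sum_mul_sq_le_sq_mul_sq Finset.univ v (G *ᵥ u)
      simpa [dotProduct, sq] using this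
    have hGu : u ⬝ᵥ (Gᵀ * G).mulVec u = (G *ᵥ u) ⬝ᵥ (G *ᵥ u) := by
      rw [← Matrix.mulVec_mulVec, Matrix.dotProduct_mulVec, Matrix.vecMul_transpose]
    have hray := rayleigh hGherm u
    rw [← hGu] at hCS
    have hb : 0 ≤ L₁ * opN G * (u ⬝ᵥ u) := by positivity
    have hsq : (v ⬝ᵥ G.mulVec u) ^ 2 ≤ (L₁ * opN G * (u ⬝ᵥ u)) ^ 2 := by
      calc (v ⬝ᵥ G.mulVec u) ^ 2 ≤ (v ⬝ᵥ v) * (u ⬝ᵥ (Gᵀ * G).mulVec u) := hCS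
        _ ≤ (L₁ ^ 2 * (u ⬝ᵥ u)) * (lamMax (Gᵀ * G) * (u ⬝ᵥ u)) :=
            mul_le_mul hvu hray (hGpsd u) (by positivity)
        _ = (L₁ * opN G * (u ⬝ᵥ u)) ^ 2 := by rw [← hopN]; ring
    nlinarith [hsq, hb]
  -- bound the quadratic form
  have hQ : Sum.elim u v ⬝ᵥ M.mulVec (Sum.elim u v)
      ≤ (lamMax W + L₁^2 * lamMax H + 2 * L₁ * opN G) * (u ⬝ᵥ u) := by
    rw [hMdef, expand_blocks]
    have h1 := rayleigh hW u
    have h2 := rayleigh hH v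
    linarith [h1, h2, hc, mul_le_mul_of_nonneg_left hvu hlH]
  -- assemble
  rw [hψ, hψ]
  refine le_trans (qNorm_tri hM _ _) ?_
  rw [hsub]
  rw [qNorm, euclNorm]
  calc Real.sqrt (Sum.elim u v ⬝ᵥ M.mulVec (Sum.elim u v))
      ≤ Real.sqrt ((lamMax W + L₁^2 * lamMax H + 2 * L₁ * opN G) * (u ⬝ᵥ u)) :=
        Real.sqrt_le_sqrt hQ
    _ = Real.sqrt (lamMax W + L₁^2 * lamMax H + 2 * L₁ * opN G) * Real.sqrt (u ⬝ᵥ u) := by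
        rw [Real.sqrt_mul (by positivity)]
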